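/- Let H be a Banach space, F : H → H with ‖F(x)‖ ≤ L‖x‖ + L' for all x, and let q solve q''(t) = -q(t) - F(q(t)) with q(0) = x, q'(0) = v. Suppose t > 0 satisfies t²(1 + L) ≤ 1. Then max_{s ≤ t} ‖q(s) - (x + s v)‖ ≤ t²(1 + L) max{‖x‖, ‖x + t v‖} + L' t². -/

import Mathlib

open Set

theorem stmt_10 {H : Type*} [NormedAddCommGroup H] [NormedSpace ℝ H]
    (F : H → H) (L L' : ℝ) (hF : ∀ x : H, ‖F x‖ ≤ L * ‖x‖ + L')
    (q p : ℝ → H) (x v : H)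
    (hq0 : q 0 = x) (hp0 : p 0 = v)
    (hq' : ∀ s : ℝ, HasDerivAt q (p s) s)
    (hp' : ∀ s : ℝ, HasDerivAt p (-(q s) - F (q s)) s)
    (t : ℝ) (ht : 0 < t) (htL : t ^ 2 * (1 + L) ≤ 1) :
    ∀ s ∈ Icc (0:ℝ) t,
      ‖q s - (x + s • v)‖ ≤ t ^ 2 * (1 + L) * max ‖x‖ ‖x + t • v‖ + L' * t ^ 2 := by
  have hL' : 0 ≤ L' := by have := hF 0; simp at this; linarith [norm_nonneg (F 0), this]
  rcases lt_or_ge L 0 with hL | hL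
  · -- degenerate case: every vector of H is 0
    have hzero : ∀ y : H, y = 0 := by
      intro y
      by_contra hy
      have hny : 0 < ‖y‖ := norm_pos_iff.mpr hy
      set c : ℝ := (L' + 1) / (-L) with hc
      have hnL : 0 < -L := by linarith
      have hc0 : 0 < c := by positivity
      set z : H := (c / ‖y‖) • y with hz
      have hnz : ‖z‖ = c := by
        rw [hz, norm_smul, Real.norm_eq_abs, abs_of_pos (by positivity), div_mul_cancel₀ _ hny.ne']
      have := hF z
      rw [hnz] at this
      have : L * c + L' = -1 := by
        rw [hc]; field_simp
        rw [mul_div_cancel_left₀ _ hL.ne]; ring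
      nlinarith [norm_nonneg (F z), hF z, hnz]
    intro s hs
    rw [hzero (q s - (x + s • v)), hzero x, hzero (0 + t • v)]
    simp only [norm_zero, max_self, mul_zero, zero_add]
    nlinarith
  · -- main case: 0 ≤ L
    intro s hs
    set K : ℝ := max ‖x‖ ‖x + t • v‖ with hK
    have hK0 : 0 ≤ K := le_trans (norm_nonneg x) (le_max_left _ _)
    -- bound on ‖x + u • v‖ for u ∈ [0,t]
    have hKb : ∀ u ∈ Icc (0:ℝ) t, ‖x + u • v‖ ≤ K := by
      intro u hu
      have h1 : 0 ≤ u / t := div_nonneg hu.1 ht.le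
      have h2 : u / t ≤ 1 := (div_le_one ht).mpr hu.2
      have heq : x + u • v = (1 - u / t) • x + (u / t) • (x + t • v) := by
        rw [smul_add, smul_smul, div_mul_cancel₀ _ ht.ne', sub_smul, one_smul]
        abel
      rw [heq]
      have := norm_add_le ((1 - u / t) • x) ((u / t) • (x + t • v))
      rw [norm_smul, norm_smul, Real.norm_eq_abs, Real.norm_eq_abs,
        abs_of_nonneg (by linarith), abs_of_nonneg h1] at this
      have hx1 : ‖x‖ ≤ K := le_max_left _ _
      have hx2 : ‖x + t • v‖ ≤ K := le_max_right _ _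
      nlinarith [norm_nonneg x, norm_nonneg (x + t • v)]
    -- continuity
    have hqc : Continuous q := by
      rw [continuous_iff_continuousAt]; exact fun u => (hq' u).continuousAt
    have hpc : Continuous p := by
      rw [continuous_iff_continuousAt]; exact fun u => (hp' u).continuousAt
    -- maximum of the error
    have hec : Continuous fun u : ℝ => ‖q u - (x + u • v)‖ := by
      exact (hqc.sub (continuous_const.add (continuous_id.smul continuous_const))).norm
    obtain ⟨s₀, hs₀, hmax⟩ := isCompact_Icc.exists_isMaxOn (nonempty_Icc.mpr ht.le)
      hec.continuousOn
    set M : ℝ := ‖q s₀ - (x + s₀ • v)‖ with hM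
    have hM0 : 0 ≤ M := norm_nonneg _
    set C : ℝ := (1 + L) * (M + K) + L' with hC
    have hC0 : 0 ≤ C := by nlinarith
    -- derivative facts
    have hqb : ∀ u ∈ Icc (0:ℝ) t, ‖q u‖ ≤ M + K := by
      intro u hu
      have h1 : ‖q u - (x + u • v)‖ ≤ M := hmax hu
      calc ‖q u‖ ≤ ‖q u - (x + u • v)‖ + ‖x + u • v‖ := by
            simpa using norm_add_le (q u - (x + u • v)) (x + u • v)
        _ ≤ M + K := add_le_add h1 (hKb u hu)
    -- step 1: ‖p u - v‖ ≤ C * u on [0,t]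
    have step1 : ∀ u ∈ Icc (0:ℝ) t, ‖p u - v‖ ≤ C * u := by
      have := image_norm_le_of_norm_deriv_right_le_deriv_boundary
        (f := fun u => p u - v) (f' := fun u => -(q u) - F (q u)) (a := 0) (b := t)
        (B := fun u => C * u) (B' := fun _ => C)
        ((hpc.sub continuous_const).continuousOn)
        (fun u _ => ((hp' u).sub_const v).hasDerivWithinAt)
        (by simp [hp0]) (fun u => by simpa using (hasDerivAt_id u).const_mul C)
        ?_
      · exact fun u hu => this hu
      · intro u hu
        have hqu : ‖q u‖ ≤ M + K := hqb u (Ico_subset_Icc_self hu)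
        calc ‖-(q u) - F (q u)‖ ≤ ‖q u‖ + ‖F (q u)‖ := by
              simpa using norm_sub_le (-(q u)) (F (q u))
          _ ≤ ‖q u‖ + (L * ‖q u‖ + L') := by linarith [hF (q u)]
          _ = (1 + L) * ‖q u‖ + L' := by ring
          _ ≤ C := by nlinarith [norm_nonneg (q u)]
    -- step 2: ‖q s - (x + s•v)‖ ≤ C * s^2/2 on [0,t]
    have step2 : ∀ u ∈ Icc (0:ℝ) t, ‖q u - (x + u • v)‖ ≤ C * u ^ 2 / 2 := by
      have := image_norm_le_of_norm_deriv_right_le_deriv_boundary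
        (f := fun u => q u - (x + u • v)) (f' := fun u => p u - v) (a := 0) (b := t)
        (B := fun u => C * u ^ 2 / 2) (B' := fun u => C * u)
        ((hqc.sub (continuous_const.add (continuous_id.smul continuous_const))).continuousOn)
        (fun u _ => (((hq' u).sub (((hasDerivAt_id u).smul_const v).const_add x)).congr_deriv
          (by simp)).hasDerivWithinAt)
        (by simp [hq0]) ?_ (fun u hu => step1 u (Ico_subset_Icc_self hu))
      · exact fun u hu => this hu
      · intro u
        have h := ((hasDerivAt_pow 2 u).const_mul C).div_const 2
        refine h.congr_deriv ?_
        ring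
    -- conclude
    have hMle : M ≤ C * t ^ 2 / 2 := by
      have h1 := step2 s₀ hs₀
      have h2 : s₀ ^ 2 ≤ t ^ 2 := by nlinarith [hs₀.1, hs₀.2]
      nlinarith
    have hMfinal : M ≤ t ^ 2 * (1 + L) * K + L' * t ^ 2 := by
      nlinarith [mul_nonneg (sub_nonneg.mpr htL) hM0]
    exact le_trans (hmax hs) hMfinal
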